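/- arXiv:2205.08154 — 3 statements merged into one kernel-verified Lean document; each statement's English description precedes it below -/
import Mathlib

section
/- Quantum no free lunch theorem: for a target unitary Y Haar-distributed on U(d), and a hypothesis unitary U that agrees with Y on an S-dimensional training subspace but is otherwise Haar-random on the complement, the expected quantum risk satisfies E[R_Y(U)] ≥ 1 − (S² + d + 1)/(d(d+1)). -/
set_option linter.unusedSectionVars false

open Matrix MeasureTheory

section aux

variable {n : ℕ} [MeasurableSpace (Matrix.unitaryGroup (Fin n) ℂ)]
  [BorelSpace (Matrix.unitaryGroup (Fin n) ℂ)]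
  (μ : Measure (Matrix.unitaryGroup (Fin n) ℂ))
  [μ.IsHaarMeasure] [IsProbabilityMeasure μ]

private lemma continuous_entry (i j : Fin n) :
    Continuous fun W : Matrix.unitaryGroup (Fin n) ℂ => (W : Matrix (Fin n) (Fin n) ℂ) i j :=
  (continuous_apply j).comp <| (continuous_apply i).comp continuous_subtype_val

private lemma integrable_bounded {f : Matrix.unitaryGroup (Fin n) ℂ → ℝ}
    (hf : Continuous f) (C : ℝ) (hC : ∀ W, |f W| ≤ C) : Integrable f μ :=
  (integrable_const C).mono' hf.aestronglyMeasurable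
    (Filter.Eventually.of_forall fun W => by simpa [Real.norm_eq_abs] using hC W)

private lemma integrable_re_mul (i j k l : Fin n) :
    Integrable (fun W : Matrix.unitaryGroup (Fin n) ℂ =>
      ((W : Matrix (Fin n) (Fin n) ℂ) i j *
        (starRingEnd ℂ) ((W : Matrix (Fin n) (Fin n) ℂ) k l)).re) μ := by
  refine integrable_bounded μ ?_ 1 ?_
  · exact Complex.continuous_re.comp
      ((continuous_entry i j).mul (Complex.continuous_conj.comp (continuous_entry k l)))
  · intro W
    have h1 := entry_norm_bound_of_unitary W.2 i j
    have h2 := entry_norm_bound_of_unitary W.2 k l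
    have := Complex.abs_re_le_norm ((W : Matrix (Fin n) (Fin n) ℂ) i j *
        (starRingEnd ℂ) ((W : Matrix (Fin n) (Fin n) ℂ) k l))
    rw [norm_mul, Complex.norm_conj] at this
    have hnn : (0:ℝ) ≤ ‖(W : Matrix (Fin n) (Fin n) ℂ) i j‖ := norm_nonneg _
    have hnn2 : (0:ℝ) ≤ ‖(W : Matrix (Fin n) (Fin n) ℂ) k l‖ := norm_nonneg _
    nlinarith

private lemma integrable_entry_re (i j : Fin n) :
    Integrable (fun W : Matrix.unitaryGroup (Fin n) ℂ =>
      ((W : Matrix (Fin n) (Fin n) ℂ) i j).re) μ := by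
  refine integrable_bounded μ (Complex.continuous_re.comp (continuous_entry i j)) 1 fun W => ?_
  have h1 := entry_norm_bound_of_unitary W.2 i j
  have := Complex.abs_re_le_norm ((W : Matrix (Fin n) (Fin n) ℂ) i j)
  linarith

private lemma integral_eq_zero_of_neg {f : Matrix.unitaryGroup (Fin n) ℂ → ℝ}
    (g : Matrix.unitaryGroup (Fin n) ℂ) (hf : ∀ W, f (g * W) = - f W) :
    ∫ W, f W ∂μ = 0 := by
  have h := integral_mul_left_eq_self (μ := μ) f g
  simp only [hf, integral_neg] at h
  linarith


private lemma trace_re_int : ∫ W : Matrix.unitaryGroup (Fin n) ℂ,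
    (Matrix.trace (W : Matrix (Fin n) (Fin n) ℂ)).re ∂μ = 0 := by
  have hmem : (-1 : Matrix (Fin n) (Fin n) ℂ) ∈ Matrix.unitaryGroup (Fin n) ℂ := by
    rw [Matrix.mem_unitaryGroup_iff]
    simp
  refine integral_eq_zero_of_neg μ ⟨-1, hmem⟩ fun W => ?_
  have hco : ((⟨-1, hmem⟩ * W : Matrix.unitaryGroup (Fin n) ℂ) : Matrix (Fin n) (Fin n) ℂ)
      = -(W : Matrix (Fin n) (Fin n) ℂ) := by
    simp [Submonoid.coe_mul]
  rw [hco]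
  simp

private lemma cross_int_zero {i j : Fin n} (hij : i ≠ j) :
    ∫ W : Matrix.unitaryGroup (Fin n) ℂ,
      ((W : Matrix (Fin n) (Fin n) ℂ) i i *
        (starRingEnd ℂ) ((W : Matrix (Fin n) (Fin n) ℂ) j j)).re ∂μ = 0 := by
  set v : Fin n → ℂ := fun k => if k = i then -1 else 1 with hv
  have hmem : Matrix.diagonal v ∈ Matrix.unitaryGroup (Fin n) ℂ := by
    rw [Matrix.mem_unitaryGroup_iff]
    rw [Matrix.star_eq_conjTranspose, Matrix.diagonal_conjTranspose,
      Matrix.diagonal_mul_diagonal]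
    have hvv : (fun k => v k * star v k) = fun _ => (1 : ℂ) := by
      funext k
      by_cases h : k = i <;> simp [hv, h]
    rw [hvv, Matrix.diagonal_one]
  refine integral_eq_zero_of_neg μ ⟨_, hmem⟩ fun W => ?_
  have hco : ((⟨_, hmem⟩ * W : Matrix.unitaryGroup (Fin n) ℂ) : Matrix (Fin n) (Fin n) ℂ)
      = Matrix.diagonal v * (W : Matrix (Fin n) (Fin n) ℂ) := rfl
  rw [hco, Matrix.diagonal_mul, Matrix.diagonal_mul]
  simp only [hv, if_pos rfl, if_neg hij.symm, one_mul, neg_one_mul, neg_mul, Complex.neg_re]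


private lemma perm_mem (σ : Equiv.Perm (Fin n)) :
    (σ.toPEquiv.toMatrix : Matrix (Fin n) (Fin n) ℂ) ∈ Matrix.unitaryGroup (Fin n) ℂ := by
  rw [Matrix.mem_unitaryGroup_iff']
  have hstar : star (σ.toPEquiv.toMatrix : Matrix (Fin n) (Fin n) ℂ)
      = (σ⁻¹.toPEquiv.toMatrix : Matrix (Fin n) (Fin n) ℂ) := by
    rw [Matrix.star_eq_conjTranspose]
    ext a b
    simp [Matrix.conjTranspose_apply, PEquiv.toMatrix_apply, Equiv.toPEquiv_apply,
      apply_ite (starRingEnd ℂ), eq_comm, Equiv.eq_symm_apply, Equiv.Perm.inv_def]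
  rw [hstar, ← PEquiv.toMatrix_trans, ← Equiv.toPEquiv_trans]
  rw [show σ⁻¹.trans σ = Equiv.refl (Fin n) by ext x; simp,
    Equiv.toPEquiv_refl, PEquiv.toMatrix_refl]

private lemma diag_entry_int_eq (i k : Fin n) :
    ∫ W : Matrix.unitaryGroup (Fin n) ℂ,
      ((W : Matrix (Fin n) (Fin n) ℂ) i i *
        (starRingEnd ℂ) ((W : Matrix (Fin n) (Fin n) ℂ) i i)).re ∂μ
    = ∫ W : Matrix.unitaryGroup (Fin n) ℂ,
      ((W : Matrix (Fin n) (Fin n) ℂ) k i *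
        (starRingEnd ℂ) ((W : Matrix (Fin n) (Fin n) ℂ) k i)).re ∂μ := by
  set σ := Equiv.swap i k
  have h := integral_mul_left_eq_self (μ := μ)
    (fun W : Matrix.unitaryGroup (Fin n) ℂ =>
      ((W : Matrix (Fin n) (Fin n) ℂ) i i *
        (starRingEnd ℂ) ((W : Matrix (Fin n) (Fin n) ℂ) i i)).re)
    ⟨_, perm_mem σ⟩
  rw [← h]
  refine integral_congr_ae (Filter.Eventually.of_forall fun W => ?_)
  have hco : ((⟨_, perm_mem σ⟩ * W : Matrix.unitaryGroup (Fin n) ℂ)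
      : Matrix (Fin n) (Fin n) ℂ) i i
      = (W : Matrix (Fin n) (Fin n) ℂ) k i := by
    have : ((⟨_, perm_mem σ⟩ * W : Matrix.unitaryGroup (Fin n) ℂ)
        : Matrix (Fin n) (Fin n) ℂ)
        = σ.toPEquiv.toMatrix * (W : Matrix (Fin n) (Fin n) ℂ) := rfl
    rw [this, PEquiv.toMatrix_toPEquiv_mul]
    simp [σ, Equiv.swap_apply_left]
  simp only [hco]

private lemma diag_entry_int (hn : 0 < n) (i : Fin n) :
    ∫ W : Matrix.unitaryGroup (Fin n) ℂ,
      ((W : Matrix (Fin n) (Fin n) ℂ) i i *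
        (starRingEnd ℂ) ((W : Matrix (Fin n) (Fin n) ℂ) i i)).re ∂μ = 1 / n := by
  have hsum : (n : ℝ) * (∫ W : Matrix.unitaryGroup (Fin n) ℂ,
      ((W : Matrix (Fin n) (Fin n) ℂ) i i *
        (starRingEnd ℂ) ((W : Matrix (Fin n) (Fin n) ℂ) i i)).re ∂μ) = 1 := by
    have h1 : (n : ℝ) * (∫ W : Matrix.unitaryGroup (Fin n) ℂ,
        ((W : Matrix (Fin n) (Fin n) ℂ) i i *
          (starRingEnd ℂ) ((W : Matrix (Fin n) (Fin n) ℂ) i i)).re ∂μ)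
        = ∑ k : Fin n, ∫ W : Matrix.unitaryGroup (Fin n) ℂ,
            ((W : Matrix (Fin n) (Fin n) ℂ) k i *
              (starRingEnd ℂ) ((W : Matrix (Fin n) (Fin n) ℂ) k i)).re ∂μ := by
      rw [Finset.sum_congr rfl fun k _ => (diag_entry_int_eq μ i k).symm]
      simp [mul_comm]
    rw [h1, ← integral_finset_sum _ fun k _ => integrable_re_mul μ k i k i]
    have hone : ∀ W : Matrix.unitaryGroup (Fin n) ℂ,
        ∑ k : Fin n, ((W : Matrix (Fin n) (Fin n) ℂ) k i *
          (starRingEnd ℂ) ((W : Matrix (Fin n) (Fin n) ℂ) k i)).re = 1 := by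
      intro W
      have hU : (star (W : Matrix (Fin n) (Fin n) ℂ) * (W : Matrix (Fin n) (Fin n) ℂ)) i i
          = (1 : Matrix (Fin n) (Fin n) ℂ) i i := by rw [W.2.1]
      rw [Matrix.mul_apply] at hU
      simp only [Matrix.star_eq_conjTranspose, Matrix.conjTranspose_apply] at hU
      have := congrArg Complex.re hU
      rw [Complex.re_sum] at this
      simpa [Matrix.one_apply, mul_comm] using this
    rw [integral_congr_ae (Filter.Eventually.of_forall fun W => hone W)]
    simp
  have hn' : (n : ℝ) ≠ 0 := Nat.cast_ne_zero.mpr hn.ne'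
  field_simp at hsum ⊢
  linarith


private lemma normSq_trace_expand (W : Matrix.unitaryGroup (Fin n) ℂ) :
    Complex.normSq (Matrix.trace (W : Matrix (Fin n) (Fin n) ℂ))
    = ∑ i : Fin n, ∑ j : Fin n, ((W : Matrix (Fin n) (Fin n) ℂ) i i *
        (starRingEnd ℂ) ((W : Matrix (Fin n) (Fin n) ℂ) j j)).re := by
  have h1 : Complex.normSq (Matrix.trace (W : Matrix (Fin n) (Fin n) ℂ))
      = (Matrix.trace (W : Matrix (Fin n) (Fin n) ℂ) *
          (starRingEnd ℂ) (Matrix.trace (W : Matrix (Fin n) (Fin n) ℂ))).re := by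
    rw [Complex.mul_conj, Complex.ofReal_re]
  rw [h1, Matrix.trace, map_sum, Finset.sum_mul_sum, Complex.re_sum]
  refine Finset.sum_congr rfl fun i _ => ?_
  rw [Complex.re_sum]
  rfl

private lemma normSq_trace_int (hn : 0 < n) :
    ∫ W : Matrix.unitaryGroup (Fin n) ℂ,
      Complex.normSq (Matrix.trace (W : Matrix (Fin n) (Fin n) ℂ)) ∂μ = 1 := by
  rw [integral_congr_ae (Filter.Eventually.of_forall fun W => normSq_trace_expand W)]
  rw [integral_finset_sum _ fun i _ =>
    integrable_finset_sum _ fun j _ => integrable_re_mul μ i i j j]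
  rw [Finset.sum_congr rfl fun i _ =>
    integral_finset_sum _ fun j _ => integrable_re_mul μ i i j j]
  have hinner : ∀ i : Fin n,
      (∑ j : Fin n, ∫ W : Matrix.unitaryGroup (Fin n) ℂ,
        ((W : Matrix (Fin n) (Fin n) ℂ) i i *
          (starRingEnd ℂ) ((W : Matrix (Fin n) (Fin n) ℂ) j j)).re ∂μ) = 1 / n := by
    intro i
    rw [Finset.sum_eq_single_of_mem i (Finset.mem_univ i)]
    · exact diag_entry_int μ hn i
    · intro j _ hji
      · exact cross_int_zero μ (Ne.symm hji)
  rw [Finset.sum_congr rfl fun i _ => hinner i]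
  simp [Finset.sum_const, hn.ne']

end aux


/-- Quantum no free lunch theorem: for a target unitary `Y` on `ℂ^d` and a hypothesis
unitary `U W = Y · (𝟙_S ⊕ W)` that agrees with `Y` on an `S`-dimensional training subspace
but is Haar-random (via `W`) on the complement, the expected quantum risk
`E[d/(d+1) − |tr(Y†·U W)|²/(d(d+1))]` is at least `1 − (S² + d + 1)/(d(d+1))`. -/
theorem quantum_no_free_lunch (d S : ℕ) (hS : S < d)
    [MeasurableSpace (Matrix.unitaryGroup (Fin (d - S)) ℂ)]
    [BorelSpace (Matrix.unitaryGroup (Fin (d - S)) ℂ)]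
    (μ : Measure (Matrix.unitaryGroup (Fin (d - S)) ℂ))
    [μ.IsHaarMeasure] [IsProbabilityMeasure μ]
    (Y : Matrix.unitaryGroup (Fin S ⊕ Fin (d - S)) ℂ) :
    (∫ W : Matrix.unitaryGroup (Fin (d - S)) ℂ,
        ((d : ℝ) / ((d : ℝ) + 1)
          - (‖(Matrix.trace
              ((Y : Matrix (Fin S ⊕ Fin (d - S)) (Fin S ⊕ Fin (d - S)) ℂ)ᴴ *
                ((Y : Matrix (Fin S ⊕ Fin (d - S)) (Fin S ⊕ Fin (d - S)) ℂ) *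
                  Matrix.fromBlocks 1 0 0
                    (W : Matrix (Fin (d - S)) (Fin (d - S)) ℂ))))‖) ^ 2 /
              ((d : ℝ) * ((d : ℝ) + 1))) ∂μ)
      ≥ 1 - ((S : ℝ) ^ 2 + (d : ℝ) + 1) / ((d : ℝ) * ((d : ℝ) + 1)) := by
  have hd : 0 < d := lt_of_le_of_lt (Nat.zero_le S) hS
  have hn : 0 < d - S := Nat.sub_pos_of_lt hS
  have hpt : ∀ W : Matrix.unitaryGroup (Fin (d - S)) ℂ,
      (‖(Matrix.trace
          ((Y : Matrix (Fin S ⊕ Fin (d - S)) (Fin S ⊕ Fin (d - S)) ℂ)ᴴ *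
            ((Y : Matrix (Fin S ⊕ Fin (d - S)) (Fin S ⊕ Fin (d - S)) ℂ) *
              Matrix.fromBlocks 1 0 0
                (W : Matrix (Fin (d - S)) (Fin (d - S)) ℂ))))‖) ^ 2
      = (S : ℝ) ^ 2
        + 2 * (S : ℝ) * (Matrix.trace (W : Matrix (Fin (d - S)) (Fin (d - S)) ℂ)).re
        + Complex.normSq (Matrix.trace (W : Matrix (Fin (d - S)) (Fin (d - S)) ℂ)) := by
    intro W
    have h1 : (Y : Matrix (Fin S ⊕ Fin (d - S)) (Fin S ⊕ Fin (d - S)) ℂ)ᴴ *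
        ((Y : Matrix (Fin S ⊕ Fin (d - S)) (Fin S ⊕ Fin (d - S)) ℂ) *
          Matrix.fromBlocks 1 0 0 (W : Matrix (Fin (d - S)) (Fin (d - S)) ℂ))
        = Matrix.fromBlocks 1 0 0 (W : Matrix (Fin (d - S)) (Fin (d - S)) ℂ) := by
      rw [← Matrix.mul_assoc, ← Matrix.star_eq_conjTranspose,
        Matrix.UnitaryGroup.star_mul_self Y, Matrix.one_mul]
    have h2 : Matrix.trace (Matrix.fromBlocks (1 : Matrix (Fin S) (Fin S) ℂ) 0 0
        (W : Matrix (Fin (d - S)) (Fin (d - S)) ℂ))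
        = (S : ℂ) + Matrix.trace (W : Matrix (Fin (d - S)) (Fin (d - S)) ℂ) := by
      simp [Matrix.trace, Matrix.diag, Fintype.sum_sum_type, Matrix.one_apply]
    rw [h1, h2, Complex.sq_norm]
    have h3 : ((S : ℂ) + Matrix.trace (W : Matrix (Fin (d - S)) (Fin (d - S)) ℂ))
        = ((S : ℝ) : ℂ) + Matrix.trace (W : Matrix (Fin (d - S)) (Fin (d - S)) ℂ) := by
      norm_num
    rw [h3, Complex.normSq_add, Complex.normSq_ofReal]
    have h4 : (((S : ℝ) : ℂ) *
        (starRingEnd ℂ) (Matrix.trace (W : Matrix (Fin (d - S)) (Fin (d - S)) ℂ))).re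
        = (S : ℝ) * (Matrix.trace (W : Matrix (Fin (d - S)) (Fin (d - S)) ℂ)).re := by
      simp [Complex.mul_re, Complex.conj_re, Complex.conj_im]
    rw [h4]
    ring
  rw [integral_congr_ae (Filter.Eventually.of_forall fun W => by rw [hpt W])]
  have int_tre : Integrable (fun W : Matrix.unitaryGroup (Fin (d - S)) ℂ =>
      (Matrix.trace (W : Matrix (Fin (d - S)) (Fin (d - S)) ℂ)).re) μ := by
    have he : (fun W : Matrix.unitaryGroup (Fin (d - S)) ℂ =>
        (Matrix.trace (W : Matrix (Fin (d - S)) (Fin (d - S)) ℂ)).re)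
        = fun W : Matrix.unitaryGroup (Fin (d - S)) ℂ =>
            ∑ i : Fin (d - S), ((W : Matrix (Fin (d - S)) (Fin (d - S)) ℂ) i i).re := by
      funext W
      rw [Matrix.trace, Complex.re_sum]
      rfl
    rw [he]
    exact integrable_finset_sum _ fun i _ => integrable_entry_re μ i i
  have int_ns : Integrable (fun W : Matrix.unitaryGroup (Fin (d - S)) ℂ =>
      Complex.normSq (Matrix.trace (W : Matrix (Fin (d - S)) (Fin (d - S)) ℂ))) μ := by
    have he : (fun W : Matrix.unitaryGroup (Fin (d - S)) ℂ =>
        Complex.normSq (Matrix.trace (W : Matrix (Fin (d - S)) (Fin (d - S)) ℂ)))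
        = fun W : Matrix.unitaryGroup (Fin (d - S)) ℂ =>
            ∑ i : Fin (d - S), ∑ j : Fin (d - S),
            ((W : Matrix (Fin (d - S)) (Fin (d - S)) ℂ) i i *
              (starRingEnd ℂ) ((W : Matrix (Fin (d - S)) (Fin (d - S)) ℂ) j j)).re :=
      funext fun W => normSq_trace_expand W
    rw [he]
    exact integrable_finset_sum _ fun i _ =>
      integrable_finset_sum _ fun j _ => integrable_re_mul μ i i j j
  have int_f1 : Integrable (fun W : Matrix.unitaryGroup (Fin (d - S)) ℂ =>
      (S : ℝ) ^ 2 + 2 * (S : ℝ) *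
        (Matrix.trace (W : Matrix (Fin (d - S)) (Fin (d - S)) ℂ)).re) μ := by
    exact (integrable_const _).add (int_tre.const_mul _)
  have int_g : Integrable (fun W : Matrix.unitaryGroup (Fin (d - S)) ℂ =>
      (S : ℝ) ^ 2 + 2 * (S : ℝ) * (Matrix.trace (W : Matrix (Fin (d - S)) (Fin (d - S)) ℂ)).re
        + Complex.normSq (Matrix.trace (W : Matrix (Fin (d - S)) (Fin (d - S)) ℂ))) μ := by
    exact int_f1.add int_ns
  have key : ∫ W : Matrix.unitaryGroup (Fin (d - S)) ℂ,
      ((d : ℝ) / ((d : ℝ) + 1)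
        - ((S : ℝ) ^ 2
            + 2 * (S : ℝ) * (Matrix.trace (W : Matrix (Fin (d - S)) (Fin (d - S)) ℂ)).re
            + Complex.normSq (Matrix.trace (W : Matrix (Fin (d - S)) (Fin (d - S)) ℂ)))
          / ((d : ℝ) * ((d : ℝ) + 1))) ∂μ
      = (d : ℝ) / ((d : ℝ) + 1) - ((S : ℝ) ^ 2 + 1) / ((d : ℝ) * ((d : ℝ) + 1)) := by
    have hg : (∫ W : Matrix.unitaryGroup (Fin (d - S)) ℂ,
        ((S : ℝ) ^ 2
          + 2 * (S : ℝ) * (Matrix.trace (W : Matrix (Fin (d - S)) (Fin (d - S)) ℂ)).re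
          + Complex.normSq (Matrix.trace (W : Matrix (Fin (d - S)) (Fin (d - S)) ℂ))) ∂μ)
        = (S : ℝ) ^ 2 + 1 := by
      rw [integral_add int_f1 int_ns,
        integral_add (integrable_const _) (int_tre.const_mul _),
        MeasureTheory.integral_const_mul, trace_re_int μ, normSq_trace_int μ hn, integral_const]
      simp
    rw [integral_sub (integrable_const _) (int_g.div_const _), integral_const, integral_div, hg]
    simp
  rw [key]
  have hd0 : (0 : ℝ) < (d : ℝ) := by exact_mod_cast hd
  have harith : (d : ℝ) / ((d : ℝ) + 1) - ((S : ℝ) ^ 2 + 1) / ((d : ℝ) * ((d : ℝ) + 1))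
      = 1 - ((S : ℝ) ^ 2 + (d : ℝ) + 1) / ((d : ℝ) * ((d : ℝ) + 1)) := by
    field_simp
    ring
  rw [harith]
end

section
/- Classical no free lunch theorem: for finite sets X, Y, a uniformly random function f : X → Y, a training set S of |S| = S input–output pairs, and any hypothesis h consistent with f on the training set (and otherwise uniformly guessing), the probability that h(x) ≠ f(x) for uniformly random x ∈ X is at least (1 − S/|X|)(1 − 1/|Y|). -/
open Finset

lemma nfl_count {X Y : Type*} [Fintype X] [Fintype Y]
    [DecidableEq X] [DecidableEq Y]
    (s : Finset X) (h : X → Y) {x : X} (hx : x ∉ s) :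
    (univ.filter (fun f : X → Y => (∀ z ∈ s, f z = h z) ∧ h x ≠ f x)).card
      = (Fintype.card Y - 1) *
        (univ.filter (fun f : X → Y => (∀ z ∈ s, f z = h z) ∧ h x = f x)).card := by
  have key : (univ.filter (fun f : X → Y => (∀ z ∈ s, f z = h z) ∧ h x ≠ f x)).card
      = ((univ.erase (h x)) ×ˢ
          (univ.filter (fun f : X → Y => (∀ z ∈ s, f z = h z) ∧ h x = f x))).card := by
    refine Finset.card_bij' (fun f _ => (f x, Function.update f x (h x)))
      (fun p _ => Function.update p.2 x p.1) ?hi ?hj ?li ?ri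
    case hi =>
      intro f hf
      simp only [mem_filter, mem_univ, true_and] at hf
      simp only [mem_product, mem_erase, mem_univ, and_true, mem_filter, true_and]
      refine ⟨fun e => hf.2 e.symm, fun z hz => ?_, ?_⟩
      · rw [Function.update_of_ne (fun e => hx (by rwa [e] at hz))]; exact hf.1 z hz
      · rw [Function.update_self]
    case hj =>
      intro p hp
      simp only [mem_product, mem_erase, mem_univ, and_true, mem_filter, true_and] at hp
      simp only [mem_filter, mem_univ, true_and]
      refine ⟨fun z hz => ?_, ?_⟩
      · rw [Function.update_of_ne (fun e => hx (by rwa [e] at hz))]; exact hp.2.1 z hz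
      · rw [Function.update_self]; exact fun e => hp.1 e.symm
    case li =>
      intro f hf
      simp only [mem_filter, mem_univ, true_and] at hf
      funext z
      by_cases hz : z = x
      · subst hz; simp
      · simp [Function.update_of_ne hz]
    case ri =>
      intro p hp
      simp only [mem_product, mem_erase, mem_univ, and_true, mem_filter, true_and] at hp
      have h1 : Function.update p.2 x p.1 x = p.1 := Function.update_self _ _ _
      refine Prod.ext ?_ ?_
      · simp
      · funext z
        by_cases hz : z = x
        · subst hz; simp [← hp.2.2]
        · simp [Function.update_of_ne hz]
  rw [key, Finset.card_product, Finset.card_erase_of_mem (mem_univ _), Finset.card_univ]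

/-- Classical no free lunch theorem: for finite sets `X`, `Y`, a uniformly random function
`f : X → Y` consistent with the hypothesis `h` on the training set `s`, the average
probability that `h x ≠ f x` for uniformly random `x` is at least
`(1 − |s|/|X|)·(1 − 1/|Y|)`. -/
theorem classical_no_free_lunch {X Y : Type*} [Fintype X] [Fintype Y]
    [DecidableEq X] [DecidableEq Y] [Nonempty X] [Nonempty Y]
    (s : Finset X) (h : X → Y) :
    ((1 : ℝ) - (s.card : ℝ) / (Fintype.card X)) * (1 - 1 / (Fintype.card Y))
      ≤ (∑ f ∈ Finset.univ.filter (fun f : X → Y => ∀ x ∈ s, f x = h x),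
            (((Finset.univ.filter (fun x : X => h x ≠ f x)).card : ℝ) / (Fintype.card X)))
          / ((Finset.univ.filter (fun f : X → Y => ∀ x ∈ s, f x = h x)).card : ℝ) := by
  classical
  set C : Finset (X → Y) := univ.filter (fun f : X → Y => ∀ x ∈ s, f x = h x) with hC
  set n := Fintype.card X
  set m := Fintype.card Y
  have hn : 0 < n := Fintype.card_pos
  have hm : 0 < m := Fintype.card_pos
  have hNpos : 0 < C.card := Finset.card_pos.2 ⟨h, by simp [hC]⟩
  set N := C.card with hN
  -- count for each x ∉ s
  have hcount : ∀ x : X, x ∉ s →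
      m * (C.filter (fun f => h x ≠ f x)).card = (m - 1) * N := by
    intro x hx
    have e1 := nfl_count s h hx
    have hff : C.filter (fun f => h x ≠ f x)
        = univ.filter (fun f : X → Y => (∀ z ∈ s, f z = h z) ∧ h x ≠ f x) := by
      rw [hC, Finset.filter_filter]
    have hff2 : C.filter (fun f => h x = f x)
        = univ.filter (fun f : X → Y => (∀ z ∈ s, f z = h z) ∧ h x = f x) := by
      rw [hC, Finset.filter_filter]
    set cn := (C.filter (fun f => h x ≠ f x)).card with hcn
    set ce := (C.filter (fun f => h x = f x)).card with hce
    have e1' : cn = (m - 1) * ce := by rw [hcn, hce, hff, hff2]; exact e1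
    have e2 : ce + cn = N := by
      rw [hce, hcn, hN]
      have := @Finset.card_filter_add_card_filter_not _ C
        (fun f => h x = f x) (fun _ => inferInstance) (fun _ => inferInstance)
      simpa using this
    obtain ⟨m', hm'⟩ : ∃ m', m = m' + 1 := ⟨m - 1, (Nat.succ_pred_eq_of_pos hm).symm⟩
    have hm1 : m - 1 = m' := by rw [hm', Nat.add_sub_cancel]
    have : m * cn = m' * (ce + cn) := by
      rw [e1', hm1, hm']; ring
    rw [e2] at this
    rw [this, hm1]
  -- swap sums
  have hswap : ∑ f ∈ C, (univ.filter (fun x : X => h x ≠ f x)).card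
      = ∑ x : X, (C.filter (fun f => h x ≠ f x)).card := by
    simp_rw [Finset.card_filter]
    exact Finset.sum_comm
  -- lower bound on the ℕ sum
  have hbound : (m - 1) * N * (n - s.card) ≤ m * ∑ f ∈ C, (univ.filter (fun x : X => h x ≠ f x)).card := by
    rw [hswap, Finset.mul_sum]
    calc (m - 1) * N * (n - s.card)
        = ∑ _x ∈ (univ \ s), (m - 1) * N := by
          rw [Finset.sum_const, Finset.card_sdiff_of_subset (subset_univ s), Finset.card_univ]
          ring
      _ = ∑ x ∈ (univ \ s), m * (C.filter (fun f => h x ≠ f x)).card := by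
          refine Finset.sum_congr rfl fun x hx => ?_
          rw [hcount x (by simpa using (Finset.mem_sdiff.1 hx).2)]
      _ ≤ ∑ x : X, m * (C.filter (fun f => h x ≠ f x)).card :=
          Finset.sum_le_sum_of_subset (Finset.sdiff_subset)
  -- pass to ℝ
  have hkn : s.card ≤ n := by simpa using Finset.card_le_univ s
  have hbR : ((m : ℝ) - 1) * N * ((n : ℝ) - s.card)
      ≤ m * ∑ f ∈ C, ((univ.filter (fun x : X => h x ≠ f x)).card : ℝ) := by
    have := hbound
    have hcast : (((m - 1) * N * (n - s.card) : ℕ) : ℝ)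
        ≤ ((m * ∑ f ∈ C, (univ.filter (fun x : X => h x ≠ f x)).card : ℕ) : ℝ) := by
      exact_mod_cast this
    push_cast [Nat.cast_sub hm, Nat.cast_sub hkn] at hcast
    linarith [hcast]
  -- finish
  rw [← Finset.sum_div, div_div, le_div_iff₀ (by positivity)]
  have hnR : (0:ℝ) < n := by exact_mod_cast hn
  have hmR : (0:ℝ) < m := by exact_mod_cast hm
  have hNR : (0:ℝ) < N := by exact_mod_cast hNpos
  have key : ((1:ℝ) - (s.card:ℝ)/n) * (1 - 1/m) * ((n:ℝ)*N)
      = ((m:ℝ) - 1) * N * ((n:ℝ) - s.card) / m := by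
    field_simp
  rw [key, div_le_iff₀ hmR]
  nlinarith [hbR]
end

section
/- Classical no free lunch theorem for invertible functions: with |X| = |Y| and f a uniformly random bijection X → X, a hypothesis consistent with f on a training set of size S and otherwise guessing uniformly among the remaining values has misclassification probability at least (1 − S/|X|)·((|X|−S−1)/|X|)·(|X|/(|X|−S)) = 1 − (S+1)/|X| when averaged. -/
open Finset

section NFL

variable {X : Type*} [Fintype X] [DecidableEq X] (s : Finset X) (h : Equiv.Perm X)

/-- consistent hypotheses -/
private def NFLP : Finset (Equiv.Perm X) :=
  Finset.univ.filter (fun f : Equiv.Perm X => ∀ x ∈ s, f x = h x)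

private lemma nfl_mem (f : Equiv.Perm X) : f ∈ NFLP s h ↔ ∀ x ∈ s, f x = h x := by
  simp [NFLP]

private lemma nfl_fiber_congr (x : X) {y z : X} (hy : ∀ x' ∈ s, h x' ≠ y)
    (hz : ∀ x' ∈ s, h x' ≠ z) :
    ((NFLP s h).filter fun f => f x = y).card
      = ((NFLP s h).filter fun f => f x = z).card := by
  apply Finset.card_bij' (fun f _ => Equiv.swap y z * f) (fun f _ => Equiv.swap y z * f)
  · intro f hf
    rw [Finset.mem_filter, nfl_mem] at hf ⊢
    obtain ⟨h1, h2⟩ := hf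
    constructor
    · intro x' hx'
      have := h1 x' hx'
      simp only [Equiv.Perm.mul_apply, this]
      exact Equiv.swap_apply_of_ne_of_ne (hy x' hx') (hz x' hx')
    · simp [Equiv.Perm.mul_apply, h2]
  · intro f hf
    rw [Finset.mem_filter, nfl_mem] at hf ⊢
    obtain ⟨h1, h2⟩ := hf
    constructor
    · intro x' hx'
      have := h1 x' hx'
      simp only [Equiv.Perm.mul_apply, this]
      exact Equiv.swap_apply_of_ne_of_ne (hy x' hx') (hz x' hx')
    · simp [Equiv.Perm.mul_apply, h2, Equiv.swap_apply_right]
  · intro f _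
    rw [← mul_assoc, Equiv.swap_mul_self, one_mul]
  · intro f _
    rw [← mul_assoc, Equiv.swap_mul_self, one_mul]

/-- the fiber count identity -/
private lemma nfl_fact1 (x : X) (hx : x ∉ s) :
    ((NFLP s h).filter fun f => f x = h x).card * (Fintype.card X - s.card)
      = (NFLP s h).card := by
  classical
  set T : Finset X := Finset.univ.filter (fun y : X => ∀ x' ∈ s, h x' ≠ y) with hTdef
  have hTc : T = (s.image h)ᶜ := by
    ext y
    simp [hTdef]
  have hTcard : T.card = Fintype.card X - s.card := by
    rw [hTc, Finset.card_compl, Finset.card_image_of_injective _ h.injective]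
  have hmem : ∀ f ∈ NFLP s h, f x ∈ T := by
    intro f hf
    rw [nfl_mem] at hf
    simp only [hTdef, Finset.mem_filter, Finset.mem_univ, true_and]
    intro x' hx'
    rw [← hf x' hx']
    intro hcon
    exact hx (f.injective hcon ▸ hx')
  have hpart : (NFLP s h).card = ∑ y ∈ T, ((NFLP s h).filter fun f => f x = y).card :=
    Finset.card_eq_sum_card_fiberwise hmem
  have hhx : h x ∈ T := by
    simp only [hTdef, Finset.mem_filter, Finset.mem_univ, true_and]
    intro x' hx' hcon
    exact hx (h.injective hcon ▸ hx')
  have hconst : ∑ y ∈ T, ((NFLP s h).filter fun f => f x = y).card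
      = T.card * ((NFLP s h).filter fun f => f x = h x).card := by
    rw [Finset.sum_congr rfl (fun y hy => ?_), Finset.sum_const, smul_eq_mul]
    have hyT : ∀ x' ∈ s, h x' ≠ y := by
      simpa [hTdef] using hy
    have hhxT : ∀ x' ∈ s, h x' ≠ h x := by
      simpa [hTdef] using hhx
    exact nfl_fiber_congr s h x hyT hhxT
  rw [hpart, hconst, hTcard, mul_comm]

private lemma nfl_key :
    (NFLP s h).card * (Fintype.card X - s.card - 1)
      ≤ ∑ f ∈ NFLP s h, (Finset.univ.filter (fun x : X => h x ≠ f x)).card := by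
  classical
  have hswap : ∑ f ∈ NFLP s h, (Finset.univ.filter (fun x : X => h x ≠ f x)).card
      = ∑ x ∈ Finset.univ.filter (fun x : X => x ∉ s),
          ((NFLP s h).filter fun f => h x ≠ f x).card := by
    have e1 : ∑ f ∈ NFLP s h, (Finset.univ.filter (fun x : X => h x ≠ f x)).card
        = ∑ x : X, ((NFLP s h).filter fun f => h x ≠ f x).card := by
      rw [Finset.sum_congr rfl (fun f _ => Finset.card_filter _ _), Finset.sum_comm]
      exact Finset.sum_congr rfl (fun x _ => (Finset.card_filter _ _).symm)
    rw [e1]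
    refine (Finset.sum_subset (Finset.filter_subset _ _) ?_).symm
    intro x _ hx
    simp only [Finset.mem_filter, Finset.mem_univ, true_and, not_not] at hx
    rw [Finset.card_eq_zero, Finset.filter_eq_empty_iff]
    intro f hf
    rw [nfl_mem] at hf
    simp [hf x hx]
  rw [hswap]
  rcases eq_or_lt_of_le (Finset.card_le_univ s) with hcard | hcard
  · have h0 : Fintype.card X - s.card - 1 = 0 := by omega
    simp [h0]
  · set n := Fintype.card X with hn
    set m := n - s.card with hm
    have hm1 : 1 ≤ m := by omega
    set c := (NFLP s h).card / m with hc
    have hcx : ∀ x ∈ Finset.univ.filter (fun x : X => x ∉ s),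
        ((NFLP s h).filter fun f => h x ≠ f x).card = (NFLP s h).card - c := by
      intro x hx
      rw [Finset.mem_filter] at hx
      have h1 := nfl_fact1 s h x hx.2
      have hfilt : c = ((NFLP s h).filter fun f => f x = h x).card :=
        Nat.div_eq_of_eq_mul_left (by omega) h1.symm
      have h2 := Finset.card_filter_add_card_filter_not
        (s := NFLP s h) (p := fun f => h x = f x)
      have h2' : ((NFLP s h).filter fun f => ¬ h x = f x)
          = ((NFLP s h).filter fun f => h x ≠ f x) := by
        apply Finset.filter_congr; intro f _; simp
      rw [h2'] at h2
      have h3 : ((NFLP s h).filter fun f => f x = h x)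
          = ((NFLP s h).filter fun f => h x = f x) := by
        apply Finset.filter_congr; intro f _; simp [eq_comm]
      rw [hfilt, h3]
      omega
    rw [Finset.sum_congr rfl hcx, Finset.sum_const, smul_eq_mul]
    have hcardfilt : (Finset.univ.filter (fun x : X => x ∉ s)).card = m := by
      have : (Finset.univ.filter (fun x : X => x ∉ s)) = sᶜ := by
        ext x; simp
      rw [this, Finset.card_compl, hm, hn]
    rw [hcardfilt]
    obtain ⟨x0, hx0⟩ : ∃ x : X, x ∉ s := by
      by_contra hcon
      push_neg at hcon
      have : s = Finset.univ := Finset.eq_univ_iff_forall.mpr hcon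
      rw [this] at hcard
      simp [Finset.card_univ, hn] at hcard
    have hcm : c * m = (NFLP s h).card := by
      have h1 := nfl_fact1 s h x0 hx0
      have : c = ((NFLP s h).filter fun f => f x0 = h x0).card :=
        Nat.div_eq_of_eq_mul_left (by omega) h1.symm
      rw [this]; exact h1
    have hcle : c ≤ (NFLP s h).card := by
      calc c = c * 1 := (mul_one c).symm
      _ ≤ c * m := Nat.mul_le_mul_left c hm1
      _ = (NFLP s h).card := hcm
    zify [hcle, hm1]
    have hcmZ : (c : ℤ) * m = ((NFLP s h).card : ℤ) := by exact_mod_cast hcm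
    nlinarith [hcmZ]

end NFL

/-- Classical no free lunch theorem for invertible functions: for a finite set `X`, a
uniformly random bijection `f : X ≃ X` consistent with the bijective hypothesis `h` on the
training set `s`, the average probability that `h x ≠ f x` for uniformly random `x` is at
least `1 − (|s| + 1)/|X|`. -/
theorem classical_no_free_lunch_invertible {X : Type*} [Fintype X] [DecidableEq X]
    [Nonempty X] (s : Finset X) (h : Equiv.Perm X) :
    (1 : ℝ) - ((s.card : ℝ) + 1) / (Fintype.card X)
      ≤ (∑ f ∈ Finset.univ.filter (fun f : Equiv.Perm X => ∀ x ∈ s, f x = h x),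
            (((Finset.univ.filter (fun x : X => h x ≠ f x)).card : ℝ) / (Fintype.card X)))
          / ((Finset.univ.filter (fun f : Equiv.Perm X => ∀ x ∈ s, f x = h x)).card : ℝ) := by
  classical
  have hPN : Finset.univ.filter (fun f : Equiv.Perm X => ∀ x ∈ s, f x = h x) = NFLP s h := rfl
  rw [hPN]
  have hhP : h ∈ NFLP s h := by rw [nfl_mem]; intro x _; rfl
  have hPpos : 0 < (NFLP s h).card := Finset.card_pos.mpr ⟨h, hhP⟩
  have hnpos : 0 < Fintype.card X := Fintype.card_pos
  set n := Fintype.card X with hn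
  have key := nfl_key s h
  have hnR : (0:ℝ) < (n:ℝ) := by exact_mod_cast hnpos
  have hPR : (0:ℝ) < ((NFLP s h).card : ℝ) := by exact_mod_cast hPpos
  rw [← Finset.sum_div, div_div, le_div_iff₀ (by positivity)]
  have hS : (((NFLP s h).card * (n - s.card - 1) : ℕ) : ℝ)
      ≤ ∑ f ∈ NFLP s h, ((Finset.univ.filter (fun x : X => h x ≠ f x)).card : ℝ) := by
    exact_mod_cast key
  have hc2 : (n:ℝ) - ((s.card : ℝ) + 1) ≤ ((n - s.card - 1 : ℕ) : ℝ) := by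
    rcases le_or_gt (s.card + 1) n with hle | hlt
    · have hnat : (n - s.card - 1) + (s.card + 1) = n := by omega
      have := congrArg (Nat.cast (R := ℝ)) hnat
      push_cast at this
      linarith
    · have h0 : n - s.card - 1 = 0 := by omega
      rw [h0]
      have : (n:ℝ) < (s.card : ℝ) + 1 := by exact_mod_cast hlt
      simp
      linarith
  calc (1 - ((s.card : ℝ) + 1) / n) * ((n:ℝ) * ((NFLP s h).card : ℝ))
      = ((n:ℝ) - ((s.card : ℝ) + 1)) * ((NFLP s h).card : ℝ) := by
        field_simp
    _ ≤ ((n - s.card - 1 : ℕ) : ℝ) * ((NFLP s h).card : ℝ) :=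
        mul_le_mul_of_nonneg_right hc2 (le_of_lt hPR)
    _ = (((NFLP s h).card * (n - s.card - 1) : ℕ) : ℝ) := by push_cast; ring
    _ ≤ _ := hS
end
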